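/- Let μ be a compactly supported probability measure with infinite support, with orthonormal polynomials p_j and Gaussian data (ζ^j_l, w^j_l). Define σ_j = Σ_{l=1}^j w^j_l p_{j-1}(ζ^j_l)^2 δ_{ζ^j_l}. Then σ_j is a probability measure, and ∫ x dσ_j = b_{j-1} and ∫ x^2 dσ_j = b_{j-1}^2 + a_{j-1}^2, where a_j, b_j are the Jacobi recurrence coefficients of μ. -/
import Mathlib


open MeasureTheory Polynomial Matrix

/-- Let `μ` be a compactly supported probability measure with infinite support,
with orthonormal polynomials `p_j` satisfying the three-term recurrence with
Jacobi coefficients `a, b` (`a_0 = 0`), and Gaussian data `(ζ^j_l, w^j_l)`.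
Then `σ_j = ∑_l w^j_l p_{j-1}(ζ^j_l)² δ_{ζ^j_l}` is a probability measure with
`∫ x dσ_j = b_{j-1}` and `∫ x² dσ_j = b_{j-1}² + a_{j-1}²`. -/
theorem sigma_j_probability_and_moments
    (μ : Measure ℝ) [IsProbabilityMeasure μ]
    (hcomp : ∃ K : Set ℝ, IsCompact K ∧ μ Kᶜ = 0)
    (hinf : ∀ s : Finset ℝ, μ ((s : Set ℝ))ᶜ ≠ 0)
    (p : ℕ → ℝ[X]) (a b : ℕ → ℝ)
    (hp0 : p 0 = 1)
    (hdeg : ∀ n, (p n).natDegree = n)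
    (hlead : ∀ n, 0 < (p n).leadingCoeff)
    (horth : ∀ m n, (∫ x, (p m).eval x * (p n).eval x ∂μ) = if m = n then 1 else 0)
    (ha0 : a 0 = 0) (hapos : ∀ n, 1 ≤ n → 0 < a n)
    (hrec0 : X * p 0 = C (a 1) * p 1 + C (b 0) * p 0)
    (hrec : ∀ n, X * p (n + 1) =
      C (a (n + 2)) * p (n + 2) + C (b (n + 1)) * p (n + 1) + C (a (n + 1)) * p n)
    (j : ℕ) (hj : 1 ≤ j)
    (ζ : Fin j → ℝ) (hζmono : StrictMono ζ)
    (hζroot : ∀ l, (p j).eval (ζ l) = 0)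
    (w : Fin j → ℝ)
    (hw : ∀ l, w l = (∑ m ∈ Finset.range j, ((p m).eval (ζ l)) ^ 2)⁻¹) :
    (∑ l, w l * ((p (j - 1)).eval (ζ l)) ^ 2 = 1) ∧
    (∑ l, w l * ((p (j - 1)).eval (ζ l)) ^ 2 * ζ l = b (j - 1)) ∧
    (∑ l, w l * ((p (j - 1)).eval (ζ l)) ^ 2 * (ζ l) ^ 2 =
      b (j - 1) ^ 2 + a (j - 1) ^ 2) := by
  -- Christoffel–Darboux identity (purely algebraic consequence of the recurrence)
  have key : ∀ n : ℕ, ∀ x y : ℝ,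
      (x - y) * ∑ m ∈ Finset.range (n + 1), (p m).eval x * (p m).eval y =
      a (n + 1) * ((p (n + 1)).eval x * (p n).eval y -
        (p n).eval x * (p (n + 1)).eval y) := by
    intro n
    induction n with
    | zero =>
      intro x y
      have hx := congrArg (eval x) hrec0
      have hy := congrArg (eval y) hrec0
      simp only [eval_mul, eval_X, eval_add, eval_C] at hx hy
      simp only [zero_add, Finset.range_one, Finset.sum_singleton]
      linear_combination (p 0).eval y * hx - (p 0).eval x * hy
    | succ n ih =>
      intro x y
      have hx := congrArg (eval x) (hrec n)
      have hy := congrArg (eval y) (hrec n)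
      simp only [eval_mul, eval_X, eval_add, eval_C] at hx hy
      rw [Finset.sum_range_succ]
      have := ih x y
      linear_combination this + (p (n + 1)).eval y * hx - (p (n + 1)).eval x * hy
  -- positivity of the Christoffel sums
  have hSpos : ∀ l, 0 < ∑ m ∈ Finset.range j, ((p m).eval (ζ l)) ^ 2 := by
    intro l
    apply Finset.sum_pos' (fun i _ => sq_nonneg _)
    refine ⟨0, Finset.mem_range.mpr hj, ?_⟩
    simp [hp0]
  have hwnn : ∀ l, 0 ≤ w l := by
    intro l
    rw [hw l]
    exact le_of_lt (inv_pos.mpr (hSpos l))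
  -- discrete orthonormality
  have horthz : ∀ m n : Fin j,
      ∑ l, w l * (p (m : ℕ)).eval (ζ l) * (p (n : ℕ)).eval (ζ l) =
        if m = n then 1 else 0 := by
    set G : Matrix (Fin j) (Fin j) ℝ :=
      Matrix.of fun l m => Real.sqrt (w l) * (p (m : ℕ)).eval (ζ l) with hGdef
    have hG : G * Gᵀ = 1 := by
      ext l k
      simp only [Matrix.mul_apply, Matrix.transpose_apply, Matrix.one_apply, hGdef,
        Matrix.of_apply]
      rcases eq_or_ne l k with rfl | hlk
      · rw [if_pos rfl]
        have hs : Real.sqrt (w l) * Real.sqrt (w l) = w l := Real.mul_self_sqrt (hwnn l)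
        have : ∀ m : Fin j,
            (Real.sqrt (w l) * (p (m : ℕ)).eval (ζ l)) *
              (Real.sqrt (w l) * (p (m : ℕ)).eval (ζ l)) =
            w l * ((p (m : ℕ)).eval (ζ l)) ^ 2 := by
          intro m; rw [mul_mul_mul_comm, hs, ← sq]
        rw [Finset.sum_congr rfl fun m _ => this m, ← Finset.mul_sum]
        rw [Fin.sum_univ_eq_sum_range (fun m => ((p m).eval (ζ l)) ^ 2)]
        rw [hw l]
        exact inv_mul_cancel₀ (ne_of_gt (hSpos l))
      · rw [if_neg hlk]
        have hzero : ∑ m ∈ Finset.range j, (p m).eval (ζ l) * (p m).eval (ζ k) = 0 := by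
          have h1 : j - 1 + 1 = j := Nat.succ_pred_eq_of_pos hj
          have hcd := key (j - 1) (ζ l) (ζ k)
          rw [h1, hζroot l, hζroot k] at hcd
          have hne : ζ l - ζ k ≠ 0 :=
            sub_ne_zero.mpr fun h => hlk (hζmono.injective h)
          have : (ζ l - ζ k) *
              ∑ m ∈ Finset.range j, (p m).eval (ζ l) * (p m).eval (ζ k) = 0 := by
            rw [hcd]; ring
          rcases mul_eq_zero.mp this with h | h
          · exact absurd h hne
          · exact h
        have : ∀ m : Fin j,
            (Real.sqrt (w l) * (p (m : ℕ)).eval (ζ l)) *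
              (Real.sqrt (w k) * (p (m : ℕ)).eval (ζ k)) =
            (Real.sqrt (w l) * Real.sqrt (w k)) *
              ((p (m : ℕ)).eval (ζ l) * (p (m : ℕ)).eval (ζ k)) := by
          intro m; ring
        rw [Finset.sum_congr rfl fun m _ => this m, ← Finset.mul_sum]
        rw [Fin.sum_univ_eq_sum_range (fun m => (p m).eval (ζ l) * (p m).eval (ζ k))]
        rw [hzero, mul_zero]
    have hG' : Gᵀ * G = 1 := mul_eq_one_comm.mp hG
    intro m n
    have hmn : (Gᵀ * G) m n = (1 : Matrix (Fin j) (Fin j) ℝ) m n := by rw [hG']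
    simp only [Matrix.mul_apply, Matrix.transpose_apply, Matrix.one_apply, hGdef,
      Matrix.of_apply] at hmn
    rw [← hmn]
    apply Finset.sum_congr rfl
    intro l _
    have hs : Real.sqrt (w l) * Real.sqrt (w l) = w l := Real.mul_self_sqrt (hwnn l)
    linear_combination (-((p (m : ℕ)).eval (ζ l) * (p (n : ℕ)).eval (ζ l))) * hs
  -- the three indices we care about
  have hj1 : j - 1 < j := Nat.sub_lt hj one_pos
  have hj2 : j - 2 < j := by omega
  have S1 : ∑ l, w l * ((p (j - 1)).eval (ζ l)) ^ 2 = 1 := by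
    have := horthz ⟨j - 1, hj1⟩ ⟨j - 1, hj1⟩
    rw [if_pos rfl] at this
    rw [← this]
    exact Finset.sum_congr rfl fun l _ => by ring
  -- pointwise recurrence at the zeros
  have hpoint : ∀ l, ζ l * (p (j - 1)).eval (ζ l) =
      b (j - 1) * (p (j - 1)).eval (ζ l) + a (j - 1) * (p (j - 2)).eval (ζ l) := by
    intro l
    match j, hj with
    | 1, _ =>
      have hx := congrArg (eval (ζ l)) hrec0
      simp only [eval_mul, eval_X, eval_add, eval_C] at hx
      have h1 := hζroot l
      simp only [show (1 : ℕ) - 1 = 0 from rfl, show (1 : ℕ) - 2 = 0 from rfl]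
      rw [hx, h1, ha0]
      ring
    | (n + 2), _ =>
      have hx := congrArg (eval (ζ l)) (hrec n)
      simp only [eval_mul, eval_X, eval_add, eval_C] at hx
      have h1 := hζroot l
      simp only [show n + 2 - 1 = n + 1 from rfl, show n + 2 - 2 = n from rfl]
      rw [hx, h1]
      ring
  -- cross and diagonal auxiliary sums
  have hcross : a (j - 1) *
      (∑ l, w l * (p (j - 1)).eval (ζ l) * (p (j - 2)).eval (ζ l)) = 0 := by
    rcases eq_or_lt_of_le hj with h | h
    · have : j - 1 = 0 := by omega
      rw [this, ha0, zero_mul]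
    · have hne : (⟨j - 1, hj1⟩ : Fin j) ≠ ⟨j - 2, hj2⟩ := by
        intro h'
        have := Fin.mk.injEq (j - 1) hj1 (j - 2) hj2 ▸ h'
        omega
      have := horthz ⟨j - 1, hj1⟩ ⟨j - 2, hj2⟩
      rw [if_neg hne] at this
      rw [this, mul_zero]
  have hdiag : a (j - 1) ^ 2 *
      (∑ l, w l * (p (j - 2)).eval (ζ l) * (p (j - 2)).eval (ζ l)) = a (j - 1) ^ 2 := by
    rcases eq_or_lt_of_le hj with h | h
    · have : j - 1 = 0 := by omega
      rw [this, ha0]; ring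
    · have := horthz ⟨j - 2, hj2⟩ ⟨j - 2, hj2⟩
      rw [if_pos rfl] at this
      rw [this, mul_one]
  refine ⟨S1, ?_, ?_⟩
  · -- first moment
    have e2 : ∀ l : Fin j, w l * ((p (j - 1)).eval (ζ l)) ^ 2 * ζ l =
        b (j - 1) * (w l * (p (j - 1)).eval (ζ l) * (p (j - 1)).eval (ζ l)) +
        a (j - 1) * (w l * (p (j - 1)).eval (ζ l) * (p (j - 2)).eval (ζ l)) := by
      intro l
      linear_combination (w l * (p (j - 1)).eval (ζ l)) * hpoint l
    rw [Finset.sum_congr rfl fun l _ => e2 l, Finset.sum_add_distrib,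
      ← Finset.mul_sum, ← Finset.mul_sum]
    have S1' : ∑ l, w l * (p (j - 1)).eval (ζ l) * (p (j - 1)).eval (ζ l) = 1 := by
      rw [← S1]; exact Finset.sum_congr rfl fun l _ => by ring
    rw [S1', hcross, mul_one, add_zero]
  · -- second moment
    have e3 : ∀ l : Fin j, w l * ((p (j - 1)).eval (ζ l)) ^ 2 * (ζ l) ^ 2 =
        b (j - 1) ^ 2 * (w l * (p (j - 1)).eval (ζ l) * (p (j - 1)).eval (ζ l)) +
        (2 * b (j - 1)) * (a (j - 1) *
          (w l * (p (j - 1)).eval (ζ l) * (p (j - 2)).eval (ζ l))) +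
        a (j - 1) ^ 2 * (w l * (p (j - 2)).eval (ζ l) * (p (j - 2)).eval (ζ l)) := by
      intro l
      linear_combination (w l * (ζ l * (p (j - 1)).eval (ζ l) +
        b (j - 1) * (p (j - 1)).eval (ζ l) +
        a (j - 1) * (p (j - 2)).eval (ζ l))) * hpoint l
    rw [Finset.sum_congr rfl fun l _ => e3 l, Finset.sum_add_distrib,
      Finset.sum_add_distrib, ← Finset.mul_sum, ← Finset.mul_sum, ← Finset.mul_sum,
      ← Finset.mul_sum]
    have S1' : ∑ l, w l * (p (j - 1)).eval (ζ l) * (p (j - 1)).eval (ζ l) = 1 := by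
      rw [← S1]; exact Finset.sum_congr rfl fun l _ => by ring
    rw [S1', hcross, hdiag, mul_one, mul_zero, add_zero]
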